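/- arXiv:math/0603352 — 2 statements merged into one kernel-verified Lean document; each statement's English description precedes it below -/
import Mathlib

section
/- Let K be a field, M a vector space over K, and let u, x, v, y ∈ M satisfy u ∧ x = v ∧ y and u ∧ x ≠ 0 in the second exterior power ⋀²_K(M). Then the K-linear span of {u, x} equals the K-linear span of {v, y}. -/
section WedgeAux
open ExteriorAlgebra

theorem ιMulti_ne_zero_of_linearIndependent'
    {K : Type*} [Field K] {M : Type*} [AddCommGroup M] [Module K M]
    {n : ℕ} {f : Fin n → M} (hf : LinearIndependent K f) :
    ιMulti K n f ≠ 0 := by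
  have hs : LinearIndepOn K id (Set.range f) := hf.linearIndepOn_id
  set b := Module.Basis.extend hs with hb
  have hmem : ∀ i, f i ∈ hs.extend (Set.subset_univ _) :=
    fun i => hs.subset_extend _ ⟨i, rfl⟩
  set φ : Fin n → M →ₗ[K] K := fun i => b.coord ⟨f i, hmem i⟩ with hφ
  have hinj := hf.injective
  have hδ : ∀ i j, φ i (f j) = if j = i then 1 else 0 := by
    intro i j
    have h1 : b ⟨f j, hmem j⟩ = f j := Module.Basis.extend_apply_self hs ⟨f j, hmem j⟩
    rw [hφ]
    show b.coord ⟨f i, hmem i⟩ (f j) = _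
    conv_lhs => rw [← h1]
    rw [Module.Basis.coord_apply, Module.Basis.repr_self]
    by_cases h : j = i
    · subst h; rw [Finsupp.single_eq_same]; simp
    · have hne : (⟨f j, hmem j⟩ : hs.extend (Set.subset_univ _)) ≠ ⟨f i, hmem i⟩ := by
        intro hc
        exact h (hinj (by simpa using congrArg Subtype.val hc))
      rw [Finsupp.single_eq_of_ne hne.symm]; simp [h]
  set L : M →ₗ[K] (Fin n → K) := LinearMap.pi φ with hL
  set F : M [⋀^Fin n]→ₗ[K] K := (Matrix.detRowAlternating).compLinearMap L with hF
  have hFf : F f = 1 := by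
    show Matrix.det (Matrix.of fun i => L (f i)) = 1
    have h2 : (Matrix.of fun i => L (f i)) = (1 : Matrix (Fin n) (Fin n) K) := by
      ext i j
      simp [hL, LinearMap.pi_apply, hδ, Matrix.one_apply, eq_comm]
    rw [h2, Matrix.det_one]
  intro h0
  set fam : ∀ i, M [⋀^Fin i]→ₗ[K] K :=
    Function.update (fun i => (0 : M [⋀^Fin i]→ₗ[K] K)) n F with hfam
  have := congrArg (liftAlternating fam) h0
  rw [liftAlternating_apply_ιMulti, map_zero] at this
  rw [hfam, Function.update_self, hFf] at this
  exact one_ne_zero this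

section main
variable {K : Type*} [Field K] {M : Type*} [AddCommGroup M] [Module K M]

lemma two_eq (u x : M) : ιMulti K 2 ![u, x] = ι K u * ι K x := by
  simp [ExteriorAlgebra.ιMulti_apply, List.ofFn_succ]

lemma three_eq (u x v : M) : ιMulti K 3 ![u, x, v] = ι K u * ι K x * ι K v := by
  simp [ExteriorAlgebra.ιMulti_apply, List.ofFn_succ, mul_assoc]

lemma indep_pair {u x : M} (h : ι K u * ι K x ≠ 0) : LinearIndependent K ![u, x] := by
  rw [LinearIndependent.pair_iff]
  intro s t hst
  by_contra hc
  apply h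
  rcases eq_or_ne s 0 with hs | hs
  · have ht : t ≠ 0 := by tauto
    have hx : x = 0 := by
      have : t • x = 0 := by simpa [hs] using hst
      exact (smul_eq_zero.mp this).resolve_left ht
    simp [hx]
  · have h2 : s • u = (-t) • x := by
      rw [neg_smul]
      linear_combination (norm := module) hst
    have hu : u = (s⁻¹ * -t) • x := by
      calc u = s⁻¹ • (s • u) := by rw [smul_smul, inv_mul_cancel₀ hs, one_smul]
        _ = s⁻¹ • ((-t) • x) := by rw [h2]
        _ = (s⁻¹ * -t) • x := by rw [smul_smul]
    rw [hu, map_smul, smul_mul_assoc, ι_sq_zero, smul_zero]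

lemma mem_span_aux {u x v y : M} (hW : ι K u * ι K x = ι K v * ι K y)
    (h3 : ι K u * ι K x ≠ 0) : v ∈ Submodule.span K {u, x} ∧ y ∈ Submodule.span K {u, x} := by
  have hind : LinearIndependent K ![u, x] := indep_pair h3
  have hrange : Set.range ![u, x] = {u, x} := by
    ext w
    simp [Fin.exists_fin_two]
    tauto
  constructor
  · by_contra hv
    have hsnoc : LinearIndependent K (Fin.snoc ![u, x] v : Fin 3 → M) := by
      rw [linearIndependent_fin_snoc]
      exact ⟨hind, by rwa [hrange]⟩
    have heq3 : (Fin.snoc ![u, x] v : Fin 3 → M) = ![u, x, v] := by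
      funext i; fin_cases i <;> rfl
    have hne3 := ιMulti_ne_zero_of_linearIndependent' hsnoc
    apply hne3
    rw [heq3, three_eq, hW]
    have h1 : ι K y * ι K v = -(ι K v * ι K y) :=
      eq_neg_of_add_eq_zero_left (ι_add_mul_swap y v)
    calc ι K v * ι K y * ι K v = ι K v * (ι K y * ι K v) := by rw [mul_assoc]
      _ = ι K v * -(ι K v * ι K y) := by rw [h1]
      _ = -(ι K v * ι K v * ι K y) := by rw [mul_neg, mul_assoc]
      _ = 0 := by rw [ι_sq_zero, zero_mul, neg_zero]
  · by_contra hy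
    have hsnoc : LinearIndependent K (Fin.snoc ![u, x] y : Fin 3 → M) := by
      rw [linearIndependent_fin_snoc]
      exact ⟨hind, by rwa [hrange]⟩
    have heq3 : (Fin.snoc ![u, x] y : Fin 3 → M) = ![u, x, y] := by
      funext i; fin_cases i <;> rfl
    have hne3 := ιMulti_ne_zero_of_linearIndependent' hsnoc
    apply hne3
    rw [heq3, three_eq, hW, mul_assoc, ι_sq_zero, mul_zero]

end main
end WedgeAux


/-- The wedge `u ∧ v` of two vectors of the `K`-vector space `M`, as an element of the
second exterior power `⋀²_K(M)`. -/
noncomputable def wedgeK (K : Type*) [Field K] {M : Type*} [AddCommGroup M] [Module K M]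
    (u v : M) : ⋀[K]^2 M :=
  ⟨ExteriorAlgebra.ιMulti K 2 ![u, v],
   ExteriorAlgebra.ιMulti_range K 2 ⟨![u, v], rfl⟩⟩

/-- If `u ∧ x = v ∧ y ≠ 0` in `⋀²_K(M)`, then the `K`-linear span of `{u, x}` equals
the `K`-linear span of `{v, y}`. -/
theorem span_eq_span_of_wedge_eq_wedge
    (K : Type*) [Field K] {M : Type*} [AddCommGroup M] [Module K M]
    (u x v y : M) (heq : wedgeK K u x = wedgeK K v y) (hne : wedgeK K u x ≠ 0) :
    Submodule.span K {u, x} = Submodule.span K {v, y} := by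
  open ExteriorAlgebra in
  have hW : ι K u * ι K x = ι K v * ι K y := by
    have h := congrArg Subtype.val heq
    simpa [wedgeK, two_eq] using h
  open ExteriorAlgebra in
  have h3 : ι K u * ι K x ≠ 0 := by
    intro h0
    apply hne
    apply Subtype.ext
    simpa [wedgeK, two_eq] using h0
  obtain ⟨hv, hy⟩ := mem_span_aux hW h3
  obtain ⟨hu, hx⟩ := mem_span_aux hW.symm (hW ▸ h3)
  apply le_antisymm <;> rw [Submodule.span_le] <;>
    simp [Set.insert_subset_iff, hu, hx, hv, hy]
end

section
/- Let a, z ∈ ℝ be nonzero, let α ∈ ℝ be irrational, and let b, z' ∈ ℝ be arbitrary. Set V = (a, 0), Z = (0, z), V' = (α·a, b), Z' = (0, z') in ℝ². Then V ∧ Z ≠ V' ∧ Z' in ⋀²_ℚ(ℝ²), the second exterior power of ℝ² viewed as a ℚ-vector space. (This is the key computation in the proof that for a purely periodic translation surface the holonomies of periodic orbits span a ℚ-vector space of dimension 2: if the J-invariant could be written both as V ∧ Z with V horizontal, Z vertical, and as V' ∧ Z' with Z' vertical and the horizontal coordinate of V' an irrational multiple of that of V, one reaches a contradiction.) -/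
/-- The wedge `u ∧ v` of two vectors of `ℝ²`, as an element of the second exterior
power `⋀²_ℚ(ℝ²)` of `ℝ²` regarded as a `ℚ`-vector space. -/
noncomputable def wedgeQ (u v : ℝ × ℝ) : ⋀[ℚ]^2 (ℝ × ℝ) :=
  ⟨ExteriorAlgebra.ιMulti ℚ 2 ![u, v],
   ExteriorAlgebra.ιMulti_range ℚ 2 ⟨![u, v], rfl⟩⟩

/-- From a `ℚ`-linearly independent set in `ℝ` and a point of it, produce a `ℚ`-linear
functional equal to `1` there and `0` on the rest of the set. -/
lemma exists_dual_functional (s : Set ℝ) (hs : LinearIndependent ℚ ((↑) : s → ℝ))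
    (x : ℝ) (hx : x ∈ s) :
    ∃ φ : ℝ →ₗ[ℚ] ℚ, φ x = 1 ∧ ∀ y ∈ s, y ≠ x → φ y = 0 := by
  set B := Module.Basis.extend hs with hB
  have hxe : x ∈ LinearIndepOn.extend (K := ℚ) (v := id) hs (Set.subset_univ s) :=
    LinearIndepOn.subset_extend (K := ℚ) (v := id) hs _ hx
  refine ⟨B.coord ⟨x, hxe⟩, ?_, ?_⟩
  · have hBx : B ⟨x, hxe⟩ = x := Module.Basis.extend_apply_self hs ⟨x, hxe⟩
    have h1 : B.coord ⟨x, hxe⟩ x = B.coord ⟨x, hxe⟩ (B ⟨x, hxe⟩) :=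
      congrArg _ hBx.symm
    rw [h1, Module.Basis.coord_apply, Module.Basis.repr_self, Finsupp.single_eq_same]
  · intro y hy hyx
    have hye : y ∈ LinearIndepOn.extend (K := ℚ) (v := id) hs (Set.subset_univ s) :=
      LinearIndepOn.subset_extend (K := ℚ) (v := id) hs _ hy
    have : B ⟨y, hye⟩ = y := Module.Basis.extend_apply_self hs ⟨y, hye⟩
    have h1 : B.coord ⟨x, hxe⟩ y = B.coord ⟨x, hxe⟩ (B ⟨y, hye⟩) :=
      congrArg _ this.symm
    rw [h1, Module.Basis.coord_apply, Module.Basis.repr_self, Finsupp.single_apply_eq_zero]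
    intro h
    exact absurd (congrArg Subtype.val h).symm hyx

/-- Key computation: if `a, z ≠ 0`, `α` is irrational, `V = (a, 0)`, `Z = (0, z)`,
`V' = (α·a, b)`, `Z' = (0, z')`, then `V ∧ Z ≠ V' ∧ Z'` in `⋀²_ℚ(ℝ²)`. -/
theorem wedgeQ_ne_of_irrational (a z : ℝ) (ha : a ≠ 0) (hz : z ≠ 0)
    (α : ℝ) (hα : Irrational α) (b z' : ℝ) :
    wedgeQ (a, 0) (0, z) ≠ wedgeQ (α * a, b) (0, z') := by
  -- independence of {a, α*a} over ℚ
  have hpair : LinearIndependent ℚ ((↑) : ({a, α * a} : Set ℝ) → ℝ) := by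
    refine linearIndepOn_id_pair ha fun q hq => ?_
    have h1 : (q : ℝ) * a = α * a := by simpa [Rat.smul_def] using hq
    exact hα.ne_rat q (mul_right_cancel₀ ha h1.symm)
  obtain ⟨φ, hφ1, hφ0⟩ := exists_dual_functional _ hpair a (by simp)
  have hmem : α * a ∈ ({a, α * a} : Set ℝ) := by simp
  have hne : α * a ≠ a := by
    intro h
    apply hα.ne_rat 1
    push_cast
    exact mul_right_cancel₀ ha (by simpa using h)
  have hφα : φ (α * a) = 0 := hφ0 _ hmem hne
  obtain ⟨ψ, hψ1, -⟩ := exists_dual_functional _ (LinearIndepOn.singleton (R := ℚ) (v := id) (i := z) hz) z rfl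
  -- build an alternating map
  set L : (ℝ × ℝ) →ₗ[ℚ] (Fin 2 → ℚ) :=
    LinearMap.pi ![φ ∘ₗ LinearMap.fst ℚ ℝ ℝ, ψ ∘ₗ LinearMap.snd ℚ ℝ ℝ] with hL
  set F : (ℝ × ℝ) [⋀^Fin 2]→ₗ[ℚ] ℚ :=
    (Matrix.detRowAlternating (R := ℚ) (n := Fin 2)).compLinearMap L with hF
  set G := ExteriorAlgebra.liftAlternating (R := ℚ) (M := ℝ × ℝ) (N := ℚ)
    (Function.update (fun i => (0 : (ℝ × ℝ) [⋀^Fin i]→ₗ[ℚ] ℚ)) 2 F) with hG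
  intro h
  have h2 := congrArg (fun w : ⋀[ℚ]^2 (ℝ × ℝ) => G w.1) h
  simp only [wedgeQ, hG, ExteriorAlgebra.liftAlternating_apply_ιMulti,
    Function.update_self] at h2
  have hFval : ∀ u v : ℝ × ℝ, F ![u, v] = φ u.1 * ψ v.2 - φ v.1 * ψ u.2 := by
    intro u v
    have hd : F ![u, v] = (Matrix.of (L ∘ ![u, v])).det := rfl
    rw [hd, Matrix.det_fin_two]
    simp [hL]
    ring
  rw [hFval, hFval] at h2
  simp [hφ1, hψ1, hφα, map_zero] at h2
end
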